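/- arXiv:1608.01172 — 3 statements merged into one kernel-verified Lean document; each statement's English description precedes it below -/
import Mathlib

section
/- (Proposition 3, first-order convergence of the primal Gram matrices.) Let B* be an invertible n×n real matrix, P an n×n real matrix, and set B = (B*)^{-T}. For each sufficiently large positive integer w let M_w = w·((w·B* + P)^{-T}) (the inverse transpose of w·B* + P, scaled by w). Then w·(M_w·M_wᵀ − B·Bᵀ) converges, as w → ∞, to −B·(Pᵀ·B + Bᵀ·P)·Bᵀ (entrywise convergence). -/
open Filter Matrix

/-- Proposition 3 (first-order convergence of the primal Gram matrices): for an
invertible real `n × n` matrix `B*` and arbitrary `P`, with `B = (B*)⁻ᵀ` and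
`M_w = w • ((w•B* + P)⁻ᵀ)`, the matrices `w • (M_w M_wᵀ − BBᵀ)` converge
entrywise to `−B (PᵀB + BᵀP) Bᵀ` as the positive integer `w → ∞`. -/
theorem primal_gram_first_order (n : ℕ)
    (Bstar P : Matrix (Fin n) (Fin n) ℝ) (hB : IsUnit Bstar.det)
    (B : Matrix (Fin n) (Fin n) ℝ) (hBdef : B = (Bstar⁻¹)ᵀ)
    (M : ℕ → Matrix (Fin n) (Fin n) ℝ)
    (hM : ∀ w : ℕ, M w = (w : ℝ) • (((w : ℝ) • Bstar + P)⁻¹)ᵀ) :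
    Tendsto (fun w : ℕ => (w : ℝ) • (M w * (M w)ᵀ - B * Bᵀ)) atTop
      (nhds (-(B * (Pᵀ * B + Bᵀ * P) * Bᵀ))) := by
  set S : Matrix (Fin n) (Fin n) ℝ := Bstar * Bstarᵀ with hS
  set T : Matrix (Fin n) (Fin n) ℝ := Bstar * Pᵀ + P * Bstarᵀ with hT
  set Q : Matrix (Fin n) (Fin n) ℝ := P * Pᵀ with hQ
  set A : ℕ → Matrix (Fin n) (Fin n) ℝ := fun w => Bstar + (w : ℝ)⁻¹ • P with hA
  have hBT : Bᵀ = Bstar⁻¹ := by rw [hBdef, transpose_transpose]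
  have hBdetT : IsUnit Bstarᵀ.det := by rwa [Matrix.det_transpose]
  have hSdet : IsUnit S.det := by
    rw [hS, Matrix.det_mul]; exact hB.mul hBdetT
  -- ε w := (w:ℝ)⁻¹ tends to 0
  have hε : Tendsto (fun w : ℕ => ((w : ℝ))⁻¹) atTop (nhds 0) :=
    tendsto_inv_atTop_zero.comp tendsto_natCast_atTop_atTop
  have hAt : Tendsto A atTop (nhds Bstar) := by
    have : Tendsto (fun w : ℕ => Bstar + ((w : ℝ))⁻¹ • P) atTop
        (nhds (Bstar + (0 : ℝ) • P)) :=
      tendsto_const_nhds.add (hε.smul_const P)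
    simpa using this
  -- X w = A w * (A w)ᵀ tends to S
  have hXt : Tendsto (fun w => A w * (A w)ᵀ) atTop (nhds S) := by
    have ht : Tendsto (fun w => (A w)ᵀ) atTop (nhds Bstarᵀ) :=
      (continuous_id.matrix_transpose.tendsto _).comp hAt
    exact hAt.mul ht
  -- inverse is continuous at S
  have hXinv : Tendsto (fun w => (A w * (A w)ᵀ)⁻¹) atTop (nhds S⁻¹) := by
    have hc : ContinuousAt Inv.inv S := by
      apply continuousAt_matrix_inv
      rw [Ring.inverse_eq_inv']
      exact continuousAt_inv₀ hSdet.ne_zero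
    exact hc.tendsto.comp hXt
  -- the limit function
  have hlim : Tendsto (fun w : ℕ =>
      -((A w * (A w)ᵀ)⁻¹ * (T + ((w : ℝ))⁻¹ • Q) * S⁻¹)) atTop
      (nhds (-(S⁻¹ * T * S⁻¹))) := by
    have hin : Tendsto (fun w : ℕ => T + ((w : ℝ))⁻¹ • Q) atTop (nhds T) := by
      have : Tendsto (fun w : ℕ => T + ((w : ℝ))⁻¹ • Q) atTop (nhds (T + (0 : ℝ) • Q)) :=
        tendsto_const_nhds.add (hε.smul_const Q)
      simpa using this
    exact ((hXinv.mul hin).mul tendsto_const_nhds).neg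
  -- the target limit equals -(S⁻¹ * T * S⁻¹)
  have hid : S⁻¹ * T * S⁻¹ = B * (Pᵀ * B + Bᵀ * P) * Bᵀ := by
    have hSi : S⁻¹ = B * Bᵀ := by
      rw [hS, Matrix.mul_inv_rev, hBdef, transpose_transpose,
        Matrix.transpose_nonsing_inv]
    have h1 : Bᵀ * Bstar = 1 := by rw [hBT, Matrix.nonsing_inv_mul _ hB]
    have h2 : Bstarᵀ * B = 1 := by
      rw [hBdef, Matrix.transpose_nonsing_inv, Matrix.mul_nonsing_inv _ hBdetT]
    rw [hSi, hT]
    rw [Matrix.mul_add, Matrix.add_mul, Matrix.mul_add, Matrix.add_mul]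
    congr 1
    · calc B * Bᵀ * (Bstar * Pᵀ) * (B * Bᵀ)
          = B * ((Bᵀ * Bstar) * (Pᵀ * (B * Bᵀ))) := by
            simp only [Matrix.mul_assoc]
        _ = B * (Pᵀ * B) * Bᵀ := by rw [h1, Matrix.one_mul]; simp only [Matrix.mul_assoc]
    · calc B * Bᵀ * (P * Bstarᵀ) * (B * Bᵀ)
          = B * Bᵀ * P * (Bstarᵀ * B) * Bᵀ := by simp only [Matrix.mul_assoc]
        _ = B * (Bᵀ * P) * Bᵀ := by rw [h2, Matrix.mul_one]; simp only [Matrix.mul_assoc]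
  rw [← hid]
  -- eventual equality
  refine Tendsto.congr' ?_ hlim
  have hdetA : Tendsto (fun w => (A w).det) atTop (nhds Bstar.det) :=
    (continuous_id.matrix_det.tendsto _).comp hAt
  have hev : ∀ᶠ w : ℕ in atTop, (A w).det ≠ 0 := hdetA.eventually_ne hB.ne_zero
  filter_upwards [hev, eventually_ge_atTop 1] with w hdet hw1
  have hw0 : (w : ℝ) ≠ 0 := by positivity
  have hAdet : IsUnit (A w).det := isUnit_iff_ne_zero.mpr hdet
  have hAdetT : IsUnit (A w)ᵀ.det := by rwa [Matrix.det_transpose]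
  have hXdet : IsUnit (A w * (A w)ᵀ).det := by
    rw [Matrix.det_mul]; exact hAdet.mul hAdetT
  -- M w = ((A w)⁻¹)ᵀ
  have hMw : M w = ((A w)⁻¹)ᵀ := by
    have hsc : (w : ℝ) • Bstar + P = (w : ℝ) • A w := by
      rw [hA]; rw [smul_add, smul_smul, mul_inv_cancel₀ hw0, one_smul]
    have hinv : ((w : ℝ) • A w)⁻¹ = (w : ℝ)⁻¹ • (A w)⁻¹ :=
      Matrix.inv_eq_right_inv (by
        rw [Matrix.smul_mul, Matrix.mul_smul, smul_smul, mul_inv_cancel₀ hw0,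
          one_smul, Matrix.mul_nonsing_inv _ hAdet])
    rw [hM w, hsc, hinv, transpose_smul, smul_smul, mul_inv_cancel₀ hw0, one_smul]
  -- Gram expression
  have hGram : M w * (M w)ᵀ = (A w * (A w)ᵀ)⁻¹ := by
    rw [hMw, transpose_transpose, Matrix.mul_inv_rev, Matrix.transpose_nonsing_inv]
  have hBB : B * Bᵀ = S⁻¹ := by
    rw [hS, Matrix.mul_inv_rev, hBdef, transpose_transpose,
      Matrix.transpose_nonsing_inv]
  -- expansion of X w
  have hXexp : A w * (A w)ᵀ = S + ((w:ℝ))⁻¹ • T + (((w:ℝ))⁻¹ * ((w:ℝ))⁻¹) • Q := by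
    rw [hA, hS, hT, hQ]
    simp only [transpose_add, transpose_smul, Matrix.add_mul, Matrix.mul_add,
      Matrix.smul_mul, Matrix.mul_smul, smul_smul, smul_add]
    abel
  -- difference identity
  have hdiff : (A w * (A w)ᵀ)⁻¹ - S⁻¹
      = (A w * (A w)ᵀ)⁻¹ * (S - A w * (A w)ᵀ) * S⁻¹ := by
    rw [Matrix.mul_sub, Matrix.sub_mul, Matrix.mul_assoc,
      Matrix.mul_nonsing_inv _ hSdet, Matrix.mul_one,
      Matrix.nonsing_inv_mul _ hXdet, Matrix.one_mul]
  have hSsub : S - A w * (A w)ᵀ = -(((w:ℝ))⁻¹ • (T + ((w:ℝ))⁻¹ • Q)) := by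
    rw [hXexp]
    simp only [smul_add, smul_smul, neg_add]
    abel
  rw [hGram, hBB, hdiff, hSsub]
  rw [Matrix.mul_neg, Matrix.neg_mul, smul_neg, neg_inj,
    Matrix.mul_smul, Matrix.smul_mul, smul_smul, mul_inv_cancel₀ hw0, one_smul]
end

section
/- (Proposition 3, quadratic convergence of the primal Gram matrices.) Let B* be an invertible n×n real matrix and P an n×n real matrix with Pᵀ·B + Bᵀ·P = 0, where B = (B*)^{-T}. For each sufficiently large positive integer w let M_w = w·((w·B* + P)^{-T}). Then w²·(M_w·M_wᵀ − B·Bᵀ) converges, as w → ∞, to B·(Pᵀ·B)·(Pᵀ·B)·Bᵀ (entrywise convergence); in particular w·(M_w·M_wᵀ − B·Bᵀ) → 0, i.e., the convergence is quadratic. -/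
open Filter Matrix

/-- Proposition 3 (quadratic convergence of the primal Gram matrices): for an
invertible real `n × n` matrix `B*` and `P` with `PᵀB + BᵀP = 0`, where
`B = (B*)⁻ᵀ`, setting `M_w = w • ((w•B* + P)⁻ᵀ)`, the matrices
`w² • (M_w M_wᵀ − BBᵀ)` converge entrywise to `B (PᵀB)(PᵀB) Bᵀ` as the
positive integer `w → ∞`; in particular `w • (M_w M_wᵀ − BBᵀ) → 0`. -/
theorem primal_gram_quadratic (n : ℕ)
    (Bstar P : Matrix (Fin n) (Fin n) ℝ) (hB : IsUnit Bstar.det)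
    (B : Matrix (Fin n) (Fin n) ℝ) (hBdef : B = (Bstar⁻¹)ᵀ)
    (hP : Pᵀ * B + Bᵀ * P = 0)
    (M : ℕ → Matrix (Fin n) (Fin n) ℝ)
    (hM : ∀ w : ℕ, M w = (w : ℝ) • (((w : ℝ) • Bstar + P)⁻¹)ᵀ) :
    Tendsto (fun w : ℕ => ((w : ℝ) ^ 2) • (M w * (M w)ᵀ - B * Bᵀ)) atTop
      (nhds (B * (Pᵀ * B) * (Pᵀ * B) * Bᵀ)) ∧
    Tendsto (fun w : ℕ => (w : ℝ) • (M w * (M w)ᵀ - B * Bᵀ)) atTop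
      (nhds 0) := by
  set S : Matrix (Fin n) (Fin n) ℝ := Bstar * Bstarᵀ with hSdef
  set Q : Matrix (Fin n) (Fin n) ℝ := P * Pᵀ with hQdef
  have hBB : Bstar * Bstar⁻¹ = 1 := Matrix.mul_nonsing_inv _ hB
  have hSdet : IsUnit S.det := by
    rw [hSdef, Matrix.det_mul, Matrix.det_transpose]; exact hB.mul hB
  have hBt : Bᵀ = Bstar⁻¹ := by rw [hBdef, Matrix.transpose_transpose]
  have hSinv : S⁻¹ = B * Bᵀ := by
    rw [hSdef, Matrix.mul_inv_rev, hBt, hBdef, Matrix.transpose_nonsing_inv]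
  -- skew-symmetry in the B*-form
  have hskew : Bstar * Pᵀ + P * Bstarᵀ = 0 := by
    have h := congrArg (fun X => Bstar * X * Bstarᵀ) hP
    simp only [Matrix.mul_add, Matrix.add_mul, Matrix.mul_zero, Matrix.zero_mul] at h
    have e1 : Bstar * (Pᵀ * B) * Bstarᵀ = Bstar * Pᵀ := by
      rw [hBdef]
      calc Bstar * (Pᵀ * (Bstar⁻¹)ᵀ) * Bstarᵀ = Bstar * Pᵀ * ((Bstar⁻¹)ᵀ * Bstarᵀ) := by
            noncomm_ring
        _ = Bstar * Pᵀ := by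
            rw [← Matrix.transpose_mul, hBB, Matrix.transpose_one, Matrix.mul_one]
    have e2 : Bstar * (Bᵀ * P) * Bstarᵀ = P * Bstarᵀ := by
      rw [hBt, ← Matrix.mul_assoc, hBB, Matrix.one_mul]
    rw [e1, e2] at h
    exact h
  have hPB : Bᵀ * P = -(Pᵀ * B) := eq_neg_of_add_eq_zero_right hP
  -- the limit equals -(S⁻¹ * Q * S⁻¹)
  have hL : B * (Pᵀ * B) * (Pᵀ * B) * Bᵀ = -(S⁻¹ * Q * S⁻¹) := by
    rw [hSinv, hQdef]
    have : B * Bᵀ * (P * Pᵀ) * (B * Bᵀ) = B * ((Bᵀ * P) * (Pᵀ * B)) * Bᵀ := by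
      noncomm_ring
    rw [this, hPB]
    noncomm_ring
  -- eventual invertibility
  have hxinv : Tendsto (fun w : ℕ => ((w : ℝ))⁻¹) atTop (nhds 0) :=
    tendsto_inv_atTop_zero.comp tendsto_natCast_atTop_atTop
  have hdet : Tendsto (fun w : ℕ => (Bstar + ((w : ℝ))⁻¹ • P).det) atTop (nhds Bstar.det) := by
    have hc : Continuous (fun x : ℝ => (Bstar + x • P).det) := by
      apply Continuous.matrix_det; fun_prop
    have := (hc.continuousAt (x := (0:ℝ))).tendsto.comp hxinv
    simpa [Function.comp_def] using this
  have hdetne : ∀ᶠ w : ℕ in atTop, (Bstar + ((w : ℝ))⁻¹ • P).det ≠ 0 :=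
    hdet.eventually_ne (isUnit_iff_ne_zero.mp hB)
  have hAunit : ∀ᶠ w : ℕ in atTop, IsUnit ((w : ℝ) • Bstar + P).det := by
    filter_upwards [hdetne, eventually_ge_atTop 1] with w hdw hw1
    have hwne : (w : ℝ) ≠ 0 := by
      exact_mod_cast Nat.one_le_iff_ne_zero.mp hw1
    have hA : (w : ℝ) • Bstar + P = (w : ℝ) • (Bstar + ((w : ℝ))⁻¹ • P) := by
      rw [smul_add, smul_smul, mul_inv_cancel₀ hwne, one_smul]
    rw [hA, Matrix.det_smul, isUnit_iff_ne_zero]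
    exact mul_ne_zero (pow_ne_zero _ hwne) hdw
  -- the key eventual identity
  have hkey : ∀ᶠ w : ℕ in atTop,
      ((w : ℝ) ^ 2) • (M w * (M w)ᵀ - B * Bᵀ)
        = -((S + (((w : ℝ) ^ 2))⁻¹ • Q)⁻¹ * Q * S⁻¹) := by
    filter_upwards [hAunit, eventually_ge_atTop 1] with w hdw hw1
    have hwne : (w : ℝ) ≠ 0 := by
      exact_mod_cast Nat.one_le_iff_ne_zero.mp hw1
    have hw2ne : ((w : ℝ) ^ 2) ≠ 0 := pow_ne_zero _ hwne
    set x : ℝ := ((w : ℝ) ^ 2)⁻¹ with hxdef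
    set A : Matrix (Fin n) (Fin n) ℝ := (w : ℝ) • Bstar + P with hAdef
    set T : Matrix (Fin n) (Fin n) ℝ := S + x • Q with hTdef
    have hAAdet : IsUnit (A * Aᵀ).det := by
      rw [Matrix.det_mul, Matrix.det_transpose]; exact hdw.mul hdw
    -- A * Aᵀ = w² • S + Q
    have hAAt : A * Aᵀ = ((w : ℝ) ^ 2) • S + Q := by
      rw [hAdef, Matrix.transpose_add, Matrix.transpose_smul, Matrix.add_mul, Matrix.mul_add,
        Matrix.mul_add]
      simp only [smul_mul_assoc, mul_smul_comm, smul_smul]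
      have hz : (w : ℝ) • (Bstar * Pᵀ) + (w : ℝ) • (P * Bstarᵀ) = 0 := by
        rw [← smul_add, hskew, smul_zero]
      calc ((w:ℝ) * (w:ℝ)) • (Bstar * Bstarᵀ) + (w:ℝ) • (Bstar * Pᵀ)
            + ((w:ℝ) • (P * Bstarᵀ) + P * Pᵀ)
          = ((w:ℝ) * (w:ℝ)) • (Bstar * Bstarᵀ)
            + (((w:ℝ) • (Bstar * Pᵀ) + (w:ℝ) • (P * Bstarᵀ)) + P * Pᵀ) := by abel
        _ = ((w : ℝ) ^ 2) • S + Q := by rw [hz, zero_add, hSdef, hQdef, sq]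
    have hTx : T = x • (A * Aᵀ) := by
      rw [hAAt, smul_add, smul_smul, hTdef, hxdef, inv_mul_cancel₀ hw2ne, one_smul]
    -- M w * (M w)ᵀ = (w*w) • (A Aᵀ)⁻¹
    have hMM2 : M w * (M w)ᵀ = ((w:ℝ) * (w:ℝ)) • (A * Aᵀ)⁻¹ := by
      rw [hM w, ← hAdef]
      rw [Matrix.transpose_smul, Matrix.transpose_transpose]
      simp only [smul_mul_assoc, mul_smul_comm, smul_smul]
      rw [Matrix.transpose_nonsing_inv, ← Matrix.mul_inv_rev]
    have hMM : M w * (M w)ᵀ = T⁻¹ := by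
      refine (Matrix.inv_eq_right_inv ?_).symm
      rw [hTx, hMM2, smul_mul_assoc, mul_smul_comm, smul_smul,
        Matrix.mul_nonsing_inv _ hAAdet,
        show x * ((w:ℝ) * (w:ℝ)) = 1 by rw [hxdef, ← sq]; exact inv_mul_cancel₀ hw2ne,
        one_smul]
    have hTdet : IsUnit T.det := by
      rw [hTx, Matrix.det_smul, isUnit_iff_ne_zero]
      exact mul_ne_zero (pow_ne_zero _ (inv_ne_zero hw2ne))
        (isUnit_iff_ne_zero.mp hAAdet)
    -- T⁻¹ - S⁻¹ = -(x • (T⁻¹ * Q * S⁻¹))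
    have hdiff : T⁻¹ - S⁻¹ = -(x • (T⁻¹ * Q * S⁻¹)) := by
      have h1 : T⁻¹ * T = 1 := Matrix.nonsing_inv_mul T hTdet
      have h2 : S * S⁻¹ = 1 := Matrix.mul_nonsing_inv S hSdet
      calc T⁻¹ - S⁻¹ = T⁻¹ * (S * S⁻¹) - (T⁻¹ * T) * S⁻¹ := by
            rw [h1, h2, Matrix.mul_one, Matrix.one_mul]
        _ = T⁻¹ * ((S - T) * S⁻¹) := by noncomm_ring
        _ = T⁻¹ * ((-(x • Q)) * S⁻¹) := by
            congr 2
            rw [hTdef]; abel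
        _ = -(x • (T⁻¹ * Q * S⁻¹)) := by
            simp only [Matrix.neg_mul, Matrix.mul_neg, smul_mul_assoc, mul_smul_comm, smul_neg]
            congr 2
            rw [hQdef]
            noncomm_ring
    rw [hMM, ← hSinv, hdiff, smul_neg, smul_smul,
      show ((w:ℝ)^2) * x = 1 from mul_inv_cancel₀ hw2ne, one_smul]
  -- continuity of the limit function
  have hF : ContinuousAt (fun x : ℝ => -((S + x • Q)⁻¹ * Q * S⁻¹)) 0 := by
    have h1 : ContinuousAt (fun x : ℝ => S + x • Q) 0 := by fun_prop
    have h2 : ContinuousAt Inv.inv ((fun x : ℝ => S + x • Q) 0) := by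
      simp only [zero_smul, add_zero]
      refine continuousAt_matrix_inv S ?_
      rw [Ring.inverse_eq_inv']
      exact continuousAt_inv₀ (isUnit_iff_ne_zero.mp hSdet)
    have h3 : ContinuousAt (fun x : ℝ => (S + x • Q)⁻¹) 0 :=
      ContinuousAt.comp (g := Inv.inv) h2 h1
    exact ((h3.mul continuousAt_const).mul continuousAt_const).neg
  have hx2 : Tendsto (fun w : ℕ => (((w:ℝ)^2))⁻¹) atTop (nhds 0) :=
    tendsto_inv_atTop_zero.comp
      ((tendsto_pow_atTop two_ne_zero).comp tendsto_natCast_atTop_atTop)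
  have main1 : Tendsto (fun w : ℕ => ((w : ℝ) ^ 2) • (M w * (M w)ᵀ - B * Bᵀ)) atTop
      (nhds (B * (Pᵀ * B) * (Pᵀ * B) * Bᵀ)) := by
    have hcomp : Tendsto (fun w : ℕ => -((S + (((w:ℝ)^2))⁻¹ • Q)⁻¹ * Q * S⁻¹)) atTop
        (nhds (B * (Pᵀ * B) * (Pᵀ * B) * Bᵀ)) := by
      have := hF.tendsto.comp hx2
      simp only [Function.comp_def] at this
      have h0 : -((S + (0:ℝ) • Q)⁻¹ * Q * S⁻¹) = B * (Pᵀ * B) * (Pᵀ * B) * Bᵀ := by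
        rw [zero_smul, add_zero, hL]
      rwa [h0] at this
    exact Filter.Tendsto.congr' (hkey.mono fun w hw => hw.symm) hcomp
  refine ⟨main1, ?_⟩
  have h2 : Tendsto (fun w : ℕ =>
      ((w:ℝ))⁻¹ • (((w : ℝ) ^ 2) • (M w * (M w)ᵀ - B * Bᵀ))) atTop (nhds 0) := by
    have := hxinv.smul main1
    rwa [zero_smul] at this
  refine Filter.Tendsto.congr' ?_ h2
  filter_upwards [eventually_ge_atTop 1] with w hw1
  have hwne : (w : ℝ) ≠ 0 := by
    exact_mod_cast Nat.one_le_iff_ne_zero.mp hw1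
  rw [smul_smul, sq, ← mul_assoc, inv_mul_cancel₀ hwne, one_mul]
end

section
/- (Cyclic quotient for the cyclic perturbation.) Let n ≥ 1, let A be an n×n lower-triangular integer matrix (A_{i,j} = 0 whenever j > i), let w be an integer, and let C_n be the n×n integer matrix with entries c_{i,j} = 1 if j = i+1 and c_{i,j} = 0 otherwise. Let Λ' be the ℤ-span of the rows of w·A + C_n inside ℤⁿ. Then the quotient group ℤⁿ / Λ' is a cyclic group, generated by the class of the first standard basis vector e₁. -/
open Matrix

/-- Cyclic quotient for the cyclic perturbation: if `A` is a lower-triangular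
`n × n` integer matrix (`n ≥ 1`), `w` an integer, and `Cₙ` the matrix with
entries `1` on the first superdiagonal and `0` elsewhere, then the quotient of
`ℤⁿ` by the ℤ-span `Λ'` of the rows of `w • A + Cₙ` is cyclic, generated by
the class of the first standard basis vector `e₁`. -/
theorem cyclic_quotient_of_cyclic_perturbation (n : ℕ) (hn : 1 ≤ n)
    (A : Matrix (Fin n) (Fin n) ℤ) (hA : ∀ i j : Fin n, i < j → A i j = 0)
    (w : ℤ)
    (C : Matrix (Fin n) (Fin n) ℤ)
    (hC : ∀ i j : Fin n, C i j = if (j : ℕ) = (i : ℕ) + 1 then 1 else 0) :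
    ∀ x : (Fin n → ℤ) ⧸
        Submodule.span ℤ (Set.range fun i : Fin n => (w • A + C) i),
      ∃ k : ℤ, x = k • Submodule.Quotient.mk
        (Pi.single (⟨0, by omega⟩ : Fin n) 1 : Fin n → ℤ) := by
  set S : Submodule ℤ (Fin n → ℤ) :=
    Submodule.span ℤ (Set.range fun i : Fin n => (w • A + C) i) with hS
  set e0 : Fin n := ⟨0, by omega⟩ with he0
  set g : (Fin n → ℤ) ⧸ S := Submodule.Quotient.mk (Pi.single e0 1) with hg
  have hmkq : ∀ v : Fin n → ℤ, S.mkQ v = Submodule.Quotient.mk v := fun v => rfl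
  have key : ∀ m : ℕ, ∀ i : Fin n, (i : ℕ) = m →
      ∃ k : ℤ, S.mkQ (Pi.single i 1) = k • g := by
    intro m
    induction m using Nat.strong_induction_on with
    | _ m ih =>
      intro i hi
      match m, hi with
      | 0, hi =>
        refine ⟨1, ?_⟩
        have : i = e0 := Fin.ext (by simp [he0, hi])
        rw [this, one_smul, hg, hmkq]
      | (m' + 1), hi =>
        have hm' : m' < n := by
          have := i.isLt; omega
        set i' : Fin n := ⟨m', hm'⟩ with hi'
        have hrow : C i' = Pi.single i 1 := by
          funext j
          rw [hC i' j, Pi.single_apply]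
          by_cases h : (j : ℕ) = m' + 1
          · rw [if_pos h, if_pos (Fin.ext (by omega))]
          · rw [if_neg h, if_neg (by intro hji; apply h; rw [hji]; omega)]
        have hmemb : S.mkQ ((w • A + C) i') = 0 := by
          rw [Submodule.mkQ_apply, Submodule.Quotient.mk_eq_zero]
          exact Submodule.subset_span ⟨i', rfl⟩
        have hdecomp : (Pi.single i 1 : Fin n → ℤ) = (w • A + C) i' - w • A i' := by
          have h1 : (w • A + C) i' = w • A i' + C i' := rfl
          rw [h1, hrow]; abel
        have hstep : S.mkQ (Pi.single i 1) = (-w) • S.mkQ (A i') := by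
          rw [hdecomp, map_sub, hmemb, _root_.map_smul, zero_sub, neg_smul]
        have hAi : (A i' : Fin n → ℤ) = ∑ j : Fin n, A i' j • Pi.single j 1 := by
          have := Finset.univ_sum_single (A i')
          rw [← this]
          refine Finset.sum_congr rfl fun j _ => ?_
          funext t
          simp [Pi.single_apply]
        have hterm : ∀ j : Fin n, ∃ c : ℤ, A i' j • S.mkQ (Pi.single j 1) = c • g := by
          intro j
          by_cases h : (j : ℕ) ≤ m'
          · rcases Nat.lt_or_ge (j : ℕ) (m' + 1) with h' | h'
            · obtain ⟨k, hk⟩ := ih (j : ℕ) (by omega) j rfl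
              exact ⟨A i' j * k, by rw [hk, smul_smul]⟩
            · omega
          · have hij : i' < j := by
              rw [Fin.lt_def]; simp [hi']; omega
            exact ⟨0, by rw [hA i' j hij, zero_smul, zero_smul]⟩
        choose c hc using hterm
        refine ⟨-w * ∑ j : Fin n, c j, ?_⟩
        rw [hstep, hAi, map_sum]
        simp_rw [_root_.map_smul]
        rw [Finset.sum_congr rfl fun j _ => hc j, ← Finset.sum_smul, smul_smul]
  intro x
  obtain ⟨v, rfl⟩ := Submodule.Quotient.mk_surjective S x
  have hv : v = ∑ j : Fin n, v j • Pi.single j 1 := by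
    have := Finset.univ_sum_single v
    rw [← this]
    refine Finset.sum_congr rfl fun j _ => ?_
    funext t
    simp [Pi.single_apply]
  have hterm : ∀ j : Fin n, ∃ c : ℤ, v j • S.mkQ (Pi.single j 1) = c • g := by
    intro j
    obtain ⟨k, hk⟩ := key (j : ℕ) j rfl
    exact ⟨v j * k, by rw [hk, smul_smul]⟩
  choose c hc using hterm
  refine ⟨∑ j : Fin n, c j, ?_⟩
  rw [← hmkq, hv, map_sum]
  simp_rw [_root_.map_smul]
  rw [Finset.sum_congr rfl fun j _ => hc j, ← Finset.sum_smul]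
end
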